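/- Let A and B be sets of integers with 0 ∈ A and 0 ∈ B. If σ(A) = α and σ(B) = β, then σ(A + B) ≥ α + β − α·β. -/

import Mathlib

/-- The counting function of a set of integers: `countZ A x` is the number of
elements `a ∈ A` with `1 ≤ a ≤ x`. -/
noncomputable def countZ (A : Set ℤ) (x : ℕ) : ℕ := (A ∩ Set.Icc 1 (x : ℤ)).ncard

/-- The Shnirel'man density of a set of integers: `σ(A) = inf_{n ≥ 1} A(n)/n`. -/
noncomputable def shnirelmannZ (A : Set ℤ) : ℝ :=
  ⨅ n : ℕ+, (countZ A n : ℝ) / ((n : ℕ) : ℝ)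

/-- The sumset of two sets of integers: all integers of the form
`a + b` with `a ∈ A ∪ {0}` and `b ∈ B ∪ {0}`. -/
def sumsetZ (A B : Set ℤ) : Set ℤ :=
  {n | ∃ a ∈ A ∪ {0}, ∃ b ∈ B ∪ {0}, n = a + b}

open Classical Finset

lemma countZ_eq_card (A : Set ℤ) (x : ℕ) :
    countZ A x = ((Finset.Icc 1 (x:ℤ)).filter (· ∈ A)).card := by
  rw [countZ, show A ∩ Set.Icc 1 (x:ℤ) = ↑((Finset.Icc 1 (x:ℤ)).filter (· ∈ A)) by
    ext m; simp; tauto]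
  exact Set.ncard_coe_finset _

noncomputable def A0 (A : Set ℤ) (n : ℤ) : Finset ℤ :=
  insert 0 ((Finset.Icc 1 n).filter (· ∈ A))

lemma zero_mem_A0 (A : Set ℤ) (n : ℤ) : (0:ℤ) ∈ A0 A n := by simp [A0]

lemma A0_mem_iff {A : Set ℤ} {n a : ℤ} :
    a ∈ A0 A n ↔ a = 0 ∨ (1 ≤ a ∧ a ≤ n ∧ a ∈ A) := by
  simp [A0]; tauto

lemma A0_nonneg {A : Set ℤ} {n a : ℤ} (h : a ∈ A0 A n) : 0 ≤ a := by
  rcases A0_mem_iff.mp h with h | h <;> omega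

lemma A0_filter_nonempty (A : Set ℤ) (n m : ℤ) (hm : 0 ≤ m) :
    ((A0 A n).filter (· ≤ m)).Nonempty :=
  ⟨0, Finset.mem_filter.mpr ⟨zero_mem_A0 A n, hm⟩⟩

noncomputable def maxA (A : Set ℤ) (n m : ℤ) : ℤ :=
  WithBot.unbotD 0 (((A0 A n).filter (· ≤ m)).max)

lemma maxA_eq_max' (A : Set ℤ) (n m : ℤ) (hm : 0 ≤ m) :
    maxA A n m = ((A0 A n).filter (· ≤ m)).max' (A0_filter_nonempty A n m hm) := by
  rw [maxA, ← Finset.coe_max' (A0_filter_nonempty A n m hm)]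
  rfl

lemma maxA_mem {A : Set ℤ} {n m : ℤ} (hm : 0 ≤ m) : maxA A n m ∈ A0 A n := by
  rw [maxA_eq_max' A n m hm]
  have := Finset.max'_mem _ (A0_filter_nonempty A n m hm)
  exact (Finset.mem_filter.mp this).1

lemma maxA_le {A : Set ℤ} {n m : ℤ} (hm : 0 ≤ m) : maxA A n m ≤ m := by
  rw [maxA_eq_max' A n m hm]
  have := Finset.max'_mem _ (A0_filter_nonempty A n m hm)
  exact (Finset.mem_filter.mp this).2

lemma le_maxA {A : Set ℤ} {n m a : ℤ} (ha : a ∈ A0 A n) (ham : a ≤ m) :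
    a ≤ maxA A n m := by
  have hm : 0 ≤ m := le_trans (A0_nonneg ha) ham
  rw [maxA_eq_max' A n m hm]
  apply Finset.le_max'
  rw [Finset.mem_filter]
  exact ⟨ha, ham⟩

lemma maxA_mono {A : Set ℤ} {n m m' : ℤ} (hm : 0 ≤ m) (h : m ≤ m') :
    maxA A n m ≤ maxA A n m' :=
  le_maxA (maxA_mem hm) (le_trans (maxA_le hm) h)

lemma maxA_self {A : Set ℤ} {n a : ℤ} (ha : a ∈ A0 A n) : maxA A n a = a :=
  le_antisymm (maxA_le (A0_nonneg ha)) (le_maxA ha le_rfl)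

lemma key_count (A B : Set ℤ) (β : ℝ)
    (hB : ∀ k : ℕ, β * k ≤ (countZ B k : ℝ)) (n : ℕ+) :
    β * ((n:ℕ):ℝ) + (1 - β) * (countZ A n : ℝ) ≤ (countZ (sumsetZ A B) n : ℝ) := by
  set nZ : ℤ := ((n:ℕ) : ℤ) with hnZ
  set I : Finset ℤ := Finset.Icc 1 nZ with hI
  set f : ℤ → ℤ := maxA A nZ with hf
  set G : Finset ℤ := I.filter (fun m => m - f m = 0 ∨ m - f m ∈ B) with hG
  have hmemI : ∀ m ∈ I, 1 ≤ m ∧ m ≤ nZ := by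
    intro m hm; rw [hI, Finset.mem_Icc] at hm; exact hm
  have hfmem : ∀ m ∈ I, f m ∈ A0 A nZ := fun m hm =>
    maxA_mem (by have := hmemI m hm; omega)
  -- Step 1 : G counts elements of the sumset
  have hGsub : G ⊆ I.filter (· ∈ sumsetZ A B) := by
    intro m hm
    rw [hG, Finset.mem_filter] at hm
    obtain ⟨hmI, hgood⟩ := hm
    rw [Finset.mem_filter]
    refine ⟨hmI, ?_⟩
    have h0m : (0:ℤ) ≤ m := by have := hmemI m hmI; omega
    have hfA : f m ∈ A ∪ {0} := by
      rcases A0_mem_iff.mp (hfmem m hmI) with h | h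
      · exact Or.inr (by simp [h])
      · exact Or.inl h.2.2
    refine ⟨f m, hfA, m - f m, ?_, by ring⟩
    rcases hgood with h | h
    · exact Or.inr (by simp [h])
    · exact Or.inl h
  have hGcount : (G.card : ℝ) ≤ (countZ (sumsetZ A B) n : ℝ) := by
    have := Finset.card_le_card hGsub
    rw [countZ_eq_card]
    exact_mod_cast this
  -- Step 2 : fiberwise decomposition
  have hcard1 : I.card = ∑ a ∈ A0 A nZ, (I.filter (fun m => f m = a)).card :=
    Finset.card_eq_sum_card_fiberwise hfmem
  have hcard2 : G.card = ∑ a ∈ A0 A nZ, (G.filter (fun m => f m = a)).card :=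
    Finset.card_eq_sum_card_fiberwise (fun m hm => hfmem m (Finset.mem_filter.mp hm).1)
  -- Step 3 : the per-fiber inequality
  have hfiber : ∀ a ∈ A0 A nZ,
      β * ((I.filter (fun m => f m = a)).card : ℝ) + (if 1 ≤ a then 1 - β else 0)
        ≤ ((G.filter (fun m => f m = a)).card : ℝ) := by
    intro a ha
    have ha0 : 0 ≤ a := A0_nonneg ha
    set Fib := I.filter (fun m => f m = a) with hFib
    have hGF : G.filter (fun m => f m = a)
        = Fib.filter (fun m => m - a = 0 ∨ m - a ∈ B) := by
      ext m
      simp only [hG, hFib, Finset.mem_filter]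
      constructor
      · rintro ⟨⟨hmI, hor⟩, hfa⟩
        exact ⟨⟨hmI, hfa⟩, by rw [← hfa]; exact hor⟩
      · rintro ⟨⟨hmI, hfa⟩, hor⟩
        exact ⟨⟨hmI, by rw [hfa]; exact hor⟩, hfa⟩
    rw [hGF]
    by_cases hne : Fib.Nonempty
    · set e := Fib.max' hne with he
      have heF : e ∈ Fib := Finset.max'_mem _ hne
      obtain ⟨heI, hefa⟩ := Finset.mem_filter.mp heF
      have he1 : 1 ≤ e := (hmemI e heI).1
      have hen : e ≤ nZ := (hmemI e heI).2
      have hae : a ≤ e := by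
        have h := maxA_le (A := A) (n := nZ) (m := e) (by omega)
        rw [← hf, hefa] at h; exact h
      have hFibEq : Fib = Finset.Icc (max a 1) e := by
        ext m
        constructor
        · intro hm
          obtain ⟨hmI, hfa⟩ := Finset.mem_filter.mp (hFib ▸ hm)
          have h1m := (hmemI m hmI).1
          have ham : a ≤ m := by
            have h := maxA_le (A := A) (n := nZ) (m := m) (by omega)
            rw [← hf, hfa] at h; exact h
          have hme : m ≤ e := Finset.le_max' Fib m hm
          rw [Finset.mem_Icc]
          omega
        · intro hm
          rw [Finset.mem_Icc] at hm
          obtain ⟨hsm, hme⟩ := hm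
          have ham : a ≤ m := le_trans (le_max_left a 1) hsm
          have h1m : 1 ≤ m := le_trans (le_max_right a 1) hsm
          have hmnZ : m ≤ nZ := le_trans hme hen
          have hmI : m ∈ I := by rw [hI]; rw [Finset.mem_Icc]; exact ⟨h1m, hmnZ⟩
          rw [hFib]
          rw [Finset.mem_filter]
          refine ⟨hmI, ?_⟩
          have h1 : a ≤ f m := le_maxA ha ham
          have h2 : f m ≤ f e := maxA_mono (by omega) hme
          rw [hefa] at h2
          omega
      -- transfer to a shifted interval
      have hshift : (Fib.filter (fun m => m - a = 0 ∨ m - a ∈ B)).card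
          = ((Finset.Icc (max a 1 - a) (e - a)).filter (fun t => t = 0 ∨ t ∈ B)).card := by
        rw [hFibEq]
        apply Finset.card_bij (fun m _ => m - a)
        · intro m hm
          rw [Finset.mem_filter, Finset.mem_Icc] at hm ⊢
          exact ⟨by omega, hm.2⟩
        · intro m hm m' hm' h
          omega
        · intro t ht
          rw [Finset.mem_filter, Finset.mem_Icc] at ht
          refine ⟨t + a, ?_, by ring⟩
          rw [Finset.mem_filter, Finset.mem_Icc]
          constructor
          · omega
          · simpa using ht.2
      rw [hshift, hFibEq]
      by_cases ha1 : 1 ≤ a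
      · -- a ≥ 1 : fiber is [a, e], shifted interval is [0, e-a]
        have hmax : max a 1 = a := by omega
        rw [hmax]
        have hset : (Finset.Icc (a - a) (e-a)).filter (fun t => t = 0 ∨ t ∈ B)
            = insert 0 ((Finset.Icc (1:ℤ) (e-a)).filter (· ∈ B)) := by
          ext t
          rw [Finset.mem_filter, Finset.mem_Icc, Finset.mem_insert, Finset.mem_filter,
            Finset.mem_Icc]
          constructor
          · rintro ⟨⟨h0, h1⟩, h2 | h2⟩
            · exact Or.inl h2
            · by_cases ht : t = 0
              · exact Or.inl ht
              · exact Or.inr ⟨⟨by omega, h1⟩, h2⟩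
          · rintro (h | ⟨⟨h1, h2⟩, h3⟩)
            · exact ⟨by omega, Or.inl h⟩
            · exact ⟨⟨by omega, h2⟩, Or.inr h3⟩
        rw [hset]
        have h0not : (0:ℤ) ∉ (Finset.Icc (1:ℤ) (e-a)).filter (· ∈ B) := by
          rw [Finset.mem_filter, Finset.mem_Icc]; omega
        rw [Finset.card_insert_of_notMem h0not]
        have hBcount : ((Finset.Icc (1:ℤ) (e-a)).filter (· ∈ B)).card
            = countZ B (e-a).toNat := by
          have hcast : (((e - a).toNat : ℕ) : ℤ) = e - a := by omega
          rw [countZ_eq_card, hcast]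
        rw [hBcount]
        have hIcc : (Finset.Icc a e).card = (e - a).toNat + 1 := by
          rw [Int.card_Icc]; omega
        rw [hIcc]
        have := hB (e - a).toNat
        push_cast
        push_cast at this
        simp only [if_pos ha1]
        linarith
      · -- a = 0 : fiber is [1, e], shifted interval is [1, e]
        have ha0' : a = 0 := by omega
        subst ha0'
        have hmax : max (0:ℤ) 1 = 1 := by omega
        rw [hmax]
        have hset : (Finset.Icc (1 - 0 : ℤ) (e - 0)).filter (fun t => t = 0 ∨ t ∈ B)
            = (Finset.Icc (1:ℤ) e).filter (· ∈ B) := by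
          ext t
          rw [Finset.mem_filter, Finset.mem_Icc, Finset.mem_filter, Finset.mem_Icc]
          constructor
          · rintro ⟨⟨h0, h1⟩, h2 | h2⟩
            · omega
            · exact ⟨⟨by omega, by omega⟩, h2⟩
          · rintro ⟨⟨h1, h2⟩, h3⟩
            exact ⟨⟨by omega, by omega⟩, Or.inr h3⟩
        rw [hset]
        have hBcount : ((Finset.Icc (1:ℤ) e).filter (· ∈ B)).card = countZ B e.toNat := by
          have hcast : ((e.toNat : ℕ) : ℤ) = e := by omega
          rw [countZ_eq_card, hcast]
        rw [hBcount]
        have hIcc : (Finset.Icc (1:ℤ) e).card = e.toNat := by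
          rw [Int.card_Icc]; omega
        rw [hIcc]
        have := hB e.toNat
        simp only [if_neg ha1]
        push_cast at this ⊢
        linarith
    · -- empty fiber : then a = 0 is forced
      rw [Finset.not_nonempty_iff_eq_empty] at hne
      have ha1 : ¬ (1 ≤ a) := by
        intro h1
        have haI : a ∈ I := by
          rw [hI, Finset.mem_Icc]
          rcases A0_mem_iff.mp ha with h | h <;> omega
        have : a ∈ Fib := by
          rw [hFib, Finset.mem_filter]
          exact ⟨haI, maxA_self ha⟩
        rw [hne] at this
        exact absurd this (Finset.notMem_empty a)
      rw [hne]
      simp [ha1]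
  -- Step 4 : sum up
  have hIcard : I.card = (n:ℕ) := by
    rw [hI, Int.card_Icc]; omega
  have hA0filter : (A0 A nZ).filter (fun a => 1 ≤ a) = (Finset.Icc 1 nZ).filter (· ∈ A) := by
    ext x
    rw [Finset.mem_filter, Finset.mem_filter, Finset.mem_Icc, A0_mem_iff]
    constructor
    · rintro ⟨h | h, h1⟩
      · omega
      · exact ⟨⟨h.1, h.2.1⟩, h.2.2⟩
    · rintro ⟨⟨h1, h2⟩, h3⟩
      exact ⟨Or.inr ⟨h1, h2, h3⟩, h1⟩
  have hsum := Finset.sum_le_sum hfiber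
  have hleft : ∑ a ∈ A0 A nZ,
      (β * ((I.filter (fun m => f m = a)).card : ℝ) + (if 1 ≤ a then 1 - β else 0))
      = β * ((n:ℕ):ℝ) + (1 - β) * (countZ A n : ℝ) := by
    rw [Finset.sum_add_distrib]
    congr 1
    · rw [← Finset.mul_sum]
      congr 1
      rw [← Nat.cast_sum, ← hcard1, hIcard]
    · rw [Finset.sum_ite, Finset.sum_const, Finset.sum_const_zero, add_zero,
        hA0filter, countZ_eq_card]
      simp [mul_comm, hnZ]
  have hright : (∑ a ∈ A0 A nZ, ((G.filter (fun m => f m = a)).card : ℝ)) = (G.card : ℝ) := by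
    rw [hcard2, Nat.cast_sum]
  rw [hleft] at hsum
  rw [hright] at hsum
  linarith

lemma shnirelmann_le (A : Set ℤ) (n : ℕ+) :
    shnirelmannZ A ≤ (countZ A n : ℝ) / ((n:ℕ) : ℝ) := by
  apply ciInf_le
  refine ⟨0, ?_⟩
  rintro x ⟨m, rfl⟩
  positivity

lemma shnirelmann_mul_le (A : Set ℤ) (n : ℕ+) :
    shnirelmannZ A * ((n:ℕ):ℝ) ≤ (countZ A n : ℝ) := by
  have h := shnirelmann_le A n
  have hn : (0:ℝ) < ((n:ℕ):ℝ) := by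
    have := n.pos
    positivity
  exact (le_div_iff₀ hn).mp h

lemma countZ_zero (A : Set ℤ) : countZ A 0 = 0 := by
  rw [countZ]
  convert Set.ncard_empty ℤ
  rw [Set.eq_empty_iff_forall_notMem]
  rintro x ⟨-, hx⟩
  rw [Set.mem_Icc] at hx
  omega

lemma countZ_one_le (A : Set ℤ) : countZ A 1 ≤ 1 := by
  rw [countZ]
  calc (A ∩ Set.Icc 1 ((1:ℕ):ℤ)).ncard ≤ (Set.Icc (1:ℤ) ((1:ℕ):ℤ)).ncard :=
        Set.ncard_le_ncard Set.inter_subset_right (Set.finite_Icc _ _)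
    _ = 1 := by norm_num

lemma shnirelmann_le_one (A : Set ℤ) : shnirelmannZ A ≤ 1 := by
  have h := shnirelmann_le A 1
  have h1 : (countZ A (1:ℕ+) : ℝ) ≤ 1 := by
    have := countZ_one_le A
    exact_mod_cast this
  calc shnirelmannZ A ≤ (countZ A (1:ℕ+) : ℝ) / (((1:ℕ+):ℕ):ℝ) := h
    _ ≤ 1 := by simpa using h1

lemma shnirelmann_mul_nat_le (A : Set ℤ) (k : ℕ) :
    shnirelmannZ A * (k:ℝ) ≤ (countZ A k : ℝ) := by
  rcases Nat.eq_zero_or_pos k with hk | hk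
  · subst hk
    simp [countZ_zero]
  · exact shnirelmann_mul_le A ⟨k, hk⟩


/-- Shnirel'man's inequality: for sets `A`, `B` of integers with `0 ∈ A ∩ B`,
if `σ(A) = α` and `σ(B) = β`, then `σ(A + B) ≥ α + β − αβ`. -/
theorem shnirelmann_inequality (A B : Set ℤ)
    (h0A : (0 : ℤ) ∈ A) (h0B : (0 : ℤ) ∈ B) (α β : ℝ)
    (hα : shnirelmannZ A = α) (hβ : shnirelmannZ B = β) :
    α + β - α * β ≤ shnirelmannZ (sumsetZ A B) := by
  subst hα
  subst hβ
  set α := shnirelmannZ A with hαdef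
  set β := shnirelmannZ B with hβdef
  have hβ1 : β ≤ 1 := shnirelmann_le_one B
  have hBk : ∀ k : ℕ, β * (k:ℝ) ≤ (countZ B k : ℝ) := by
    intro k
    have := shnirelmann_mul_nat_le B k
    linarith [this]
  rw [shnirelmannZ]
  apply le_ciInf
  intro n
  have hn : (0:ℝ) < (((n:ℕ)):ℝ) := by
    have := n.pos
    positivity
  rw [le_div_iff₀ hn]
  have hkey := key_count A B β hBk n
  have hA : α * ((n:ℕ):ℝ) ≤ (countZ A n : ℝ) := shnirelmann_mul_le A n
  have hmul : (1 - β) * (α * ((n:ℕ):ℝ)) ≤ (1 - β) * (countZ A n : ℝ) :=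
    mul_le_mul_of_nonneg_left hA (by linarith)
  calc (α + β - α * β) * ((n:ℕ):ℝ)
      = β * ((n:ℕ):ℝ) + (1 - β) * (α * ((n:ℕ):ℝ)) := by ring
    _ ≤ β * ((n:ℕ):ℝ) + (1 - β) * (countZ A n : ℝ) := by linarith
    _ ≤ (countZ (sumsetZ A B) n : ℝ) := hkey
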